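/- arXiv:2404.05672 — 2 statements merged into one kernel-verified Lean document; each statement's English description precedes it below -/
import Mathlib

section
/- Fix an integer ℓ ≥ 1. For every integer n ≥ ℓ + 2, the total number of ℓ-peaks over all Catalan words of length n equals C(2(n-ℓ)-1, n-ℓ-2); moreover this total is 0 when 1 ≤ n < ℓ + 2. -/
/-- The set of Catalan words of length `n`: words `w` over ℕ with `w 1 = 0` and
`w (i+1) ≤ w i + 1` for all `i`. -/
def CatalanWord (n : ℕ) : Set (List ℕ) :=
  {w | w.length = n ∧ w.getD 0 0 = 0 ∧
    ∀ i, i + 1 < n → w.getD (i + 1) 0 ≤ w.getD i 0 + 1}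

/-- Number of `l`-peaks of `w`: occurrences of a factor `a (a+1)^l b` with `a ≥ b`. -/
def lPeaks (l : ℕ) (w : List ℕ) : ℕ :=
  ((Finset.range w.length).filter (fun i =>
    i + l + 1 < w.length ∧
    (∀ j, j < l → w.getD (i + 1 + j) 0 = w.getD i 0 + 1) ∧
    w.getD (i + l + 1) 0 ≤ w.getD i 0)).card

def catF : ℕ → Finset (List ℕ)
  | 0 => ∅
  | 1 => {[0]}
  | n+2 => (catF (n+1)).biUnion fun r => (Finset.range (r.headD 0 + 2)).image fun c => c :: r

lemma mem_catF_succ {n : ℕ} (hn : 1 ≤ n) (r : List ℕ) :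
    r ∈ catF (n+1) ↔ ∃ r' ∈ catF n, ∃ c ≤ r'.headD 0 + 1, r = c :: r' := by
  obtain ⟨s, rfl⟩ : ∃ s, n = s + 1 := ⟨n-1, by omega⟩
  show r ∈ catF (s+2) ↔ _
  rw [catF]
  simp only [Finset.mem_biUnion, Finset.mem_image, Finset.mem_range, Nat.lt_succ_iff]
  constructor
  · rintro ⟨r', hr', c, hc, rfl⟩
    exact ⟨r', hr', c, by omega, rfl⟩
  · rintro ⟨r', hr', c, hc, rfl⟩
    exact ⟨r', hr', c, by omega, rfl⟩

lemma catF_length : ∀ n, ∀ r ∈ catF n, r.length = n := by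
  intro n
  induction n using Nat.strong_induction_on with
  | _ n ih =>
    match n with
    | 0 => simp [catF]
    | 1 => intro r hr; simp [catF] at hr; subst hr; rfl
    | n+2 =>
      intro r hr
      rw [mem_catF_succ (by omega)] at hr
      obtain ⟨r', hr', c, hc, rfl⟩ := hr
      simp [ih (n+1) (by omega) r' hr']

lemma catF_head_lt : ∀ n, ∀ r ∈ catF n, r.headD 0 < n := by
  intro n
  induction n using Nat.strong_induction_on with
  | _ n ih =>
    match n with
    | 0 => simp [catF]
    | 1 => intro r hr; simp [catF] at hr; subst hr; simp
    | n+2 =>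
      intro r hr
      rw [mem_catF_succ (by omega)] at hr
      obtain ⟨r', hr', c, hc, rfl⟩ := hr
      have := ih (n+1) (by omega) r' hr'
      simp only [List.headD_cons]
      omega

lemma catF_ne_nil {n : ℕ} (hn : 1 ≤ n) {r : List ℕ} (hr : r ∈ catF n) : r ≠ [] := by
  have := catF_length n r hr
  intro h; subst h; simp at this; omega
-- getD of reverse
lemma getD_reverse {r : List ℕ} {i : ℕ} (h : i < r.length) :
    r.reverse.getD i 0 = r.getD (r.length - 1 - i) 0 := by
  rw [List.getD_eq_getElem r.reverse 0 (by simpa), List.getD_eq_getElem r 0 (by omega)]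
  exact List.getElem_reverse ..

lemma head_eq_getD_reverse {r : List ℕ} (h : r ≠ []) :
    r.reverse.getD (r.length - 1) 0 = r.headD 0 := by
  have hl : 0 < r.length := List.length_pos_iff.mpr h
  rw [getD_reverse (by omega)]
  have : r.length - 1 - (r.length - 1) = 0 := by omega
  rw [this]
  cases r with
  | nil => simp at h
  | cons a t => simp

-- appending a letter to a Catalan word
lemma cat_append {w : List ℕ} {c n : ℕ} (hn : 1 ≤ n) (hw : w.length = n) :
    (w ++ [c]) ∈ CatalanWord (n+1) ↔ w ∈ CatalanWord n ∧ c ≤ w.getD (n-1) 0 + 1 := by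
  have hget : ∀ i, i < n → (w ++ [c]).getD i 0 = w.getD i 0 := by
    intro i hi; exact List.getD_append w [c] 0 i (by omega)
  have hgetn : (w ++ [c]).getD n 0 = c := by
    rw [List.getD_append_right w [c] 0 n (by omega)]
    simp [hw]
  constructor
  · rintro ⟨h1, h2, h3⟩
    refine ⟨⟨hw, ?_, ?_⟩, ?_⟩
    · rw [← hget 0 (by omega)]; exact h2
    · intro i hi
      have := h3 i (by omega)
      rwa [hget (i+1) (by omega), hget i (by omega)] at this
    · have := h3 (n-1) (by omega)
      have e : n - 1 + 1 = n := by omega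
      rw [e, hgetn, hget (n-1) (by omega)] at this
      exact this
  · rintro ⟨⟨h1, h2, h3⟩, hc⟩
    refine ⟨by simp [hw], ?_, ?_⟩
    · rw [hget 0 (by omega)]; exact h2
    · intro i hi
      rcases Nat.lt_or_ge (i+1) n with h | h
      · rw [hget (i+1) (by omega), hget i (by omega)]; exact h3 i h
      · have hi1 : i + 1 = n := by omega
        rw [hi1, hgetn]
        have : i = n - 1 := by omega
        rw [this, hget (n-1) (by omega)]
        exact hc

lemma mem_catF_iff : ∀ n, 1 ≤ n → ∀ r : List ℕ, r ∈ catF n ↔ r.reverse ∈ CatalanWord n := by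
  intro n
  induction n using Nat.strong_induction_on with
  | _ n ih =>
    match n with
    | 0 => intro h; omega
    | 1 =>
      intro _ r
      constructor
      · intro hr; simp [catF] at hr; subst hr
        exact ⟨rfl, rfl, by intro i hi; omega⟩
      · rintro ⟨h1, h2, _⟩
        have : r.length = 1 := by simpa using h1
        obtain ⟨a, rfl⟩ : ∃ a, r = [a] := by
          cases r with
          | nil => simp at this
          | cons a t => cases t with
            | nil => exact ⟨a, rfl⟩
            | cons b t' => simp at this
        simp at h2
        simp [catF, h2]
    | (n+2) =>
      intro _ r
      rw [mem_catF_succ (by omega)]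
      constructor
      · rintro ⟨r', hr', c, hc, rfl⟩
        have hlen : r'.length = n+1 := catF_length _ _ hr'
        have hrev : r'.reverse ∈ CatalanWord (n+1) := (ih (n+1) (by omega) (by omega) r').mp hr'
        have : (c :: r').reverse = r'.reverse ++ [c] := by simp
        rw [this]
        rw [cat_append (by omega) (by simp [hlen])]
        refine ⟨hrev, ?_⟩
        have : r'.reverse.getD (n+1-1) 0 = r'.headD 0 := by
          have := head_eq_getD_reverse (catF_ne_nil (by omega) hr')
          rwa [hlen] at this
        rw [this]; exact hc
      · intro hr
        have hlen : r.length = n + 2 := by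
          have : r.reverse.length = n+2 := hr.1
          simpa using this
        obtain ⟨c, r', rfl⟩ : ∃ c r', r = c :: r' := by
          cases r with
          | nil => simp at hlen
          | cons a t => exact ⟨a, t, rfl⟩
        have hlen' : r'.length = n + 1 := by simpa using hlen
        have hrev : (c :: r').reverse = r'.reverse ++ [c] := by simp
        rw [hrev] at hr
        rw [cat_append (n := n+1) (by omega) (by simp [hlen'])] at hr
        refine ⟨r', ?_, c, ?_, rfl⟩
        · exact (ih (n+1) (by omega) (by omega) r').mpr hr.1
        · have : r'.reverse.getD (n+1-1) 0 = r'.headD 0 := by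
            have := head_eq_getD_reverse (r := r') (by intro h; subst h; simp at hlen')
            rwa [hlen'] at this
          rw [this] at hr
          exact hr.2

lemma catalanWord_eq_image {n : ℕ} (hn : 1 ≤ n) :
    CatalanWord n = ↑((catF n).image List.reverse) := by
  ext w
  simp only [Finset.coe_image, Set.mem_image, Finset.mem_coe]
  constructor
  · intro hw
    refine ⟨w.reverse, ?_, by simp⟩
    rw [mem_catF_iff n hn]
    simpa using hw
  · rintro ⟨r, hr, rfl⟩
    exact (mem_catF_iff n hn r).mp hr
def newP (l : ℕ) (w : List ℕ) (c : ℕ) : Prop :=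
  l + 1 ≤ w.length ∧
    (∀ j, j < l → w.getD (w.length - l + j) 0 = w.getD (w.length - l - 1) 0 + 1) ∧
    c ≤ w.getD (w.length - l - 1) 0

instance (l : ℕ) (w : List ℕ) (c : ℕ) : Decidable (newP l w c) := by
  unfold newP; exact inferInstance

lemma lPeaks_append (l : ℕ) (hl : 1 ≤ l) (w : List ℕ) (c : ℕ) :
    lPeaks l (w ++ [c]) = lPeaks l w + (if newP l w c then 1 else 0) := by
  set n := w.length with hn
  have hget : ∀ i, i < n → (w ++ [c]).getD i 0 = w.getD i 0 := fun i hi =>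
    List.getD_append w [c] 0 i (by omega)
  have hgetn : (w ++ [c]).getD n 0 = c := by
    rw [List.getD_append_right w [c] 0 n (by omega)]; simp [hn]
  have hsplit : (Finset.range (w ++ [c]).length).filter (fun i =>
      i + l + 1 < (w ++ [c]).length ∧
      (∀ j, j < l → (w ++ [c]).getD (i + 1 + j) 0 = (w ++ [c]).getD i 0 + 1) ∧
      (w ++ [c]).getD (i + l + 1) 0 ≤ (w ++ [c]).getD i 0) =
    ((Finset.range n).filter (fun i =>
      i + l + 1 < n ∧
      (∀ j, j < l → w.getD (i + 1 + j) 0 = w.getD i 0 + 1) ∧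
      w.getD (i + l + 1) 0 ≤ w.getD i 0)) ∪
    (if newP l w c then {n - l - 1} else ∅) := by
    ext i
    simp only [Finset.mem_filter, Finset.mem_range, Finset.mem_union, List.length_append,
      List.length_cons, List.length_nil]
    constructor
    · rintro ⟨hi, hil, hrun, hend⟩
      rcases Nat.lt_or_ge (i + l + 1) n with h | h
      · left
        refine ⟨by omega, h, ?_, ?_⟩
        · intro j hj
          have := hrun j hj
          rwa [hget (i+1+j) (by omega), hget i (by omega)] at this
        · have := hend
          rwa [hget (i+l+1) (by omega), hget i (by omega)] at this
      · right
        have heq : i + l + 1 = n := by omega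
        have hnew : newP l w c := by
          refine ⟨by omega, ?_, ?_⟩
          · intro j hj
            have := hrun j hj
            rw [hget (i+1+j) (by omega), hget i (by omega)] at this
            have e1 : n - l + j = i + 1 + j := by omega
            have e2 : n - l - 1 = i := by omega
            rw [e1, e2]; exact this
          · have := hend
            rw [heq, hgetn, hget i (by omega)] at this
            have e2 : n - l - 1 = i := by omega
            rw [e2]; exact this
        simp [hnew]
        omega
    · rintro (⟨hi, hil, hrun, hend⟩ | hmem)
      · refine ⟨by omega, by omega, ?_, ?_⟩
        · intro j hj
          rw [hget (i+1+j) (by omega), hget i (by omega)]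
          exact hrun j hj
        · rw [hget (i+l+1) (by omega), hget i (by omega)]
          exact hend
      · by_cases hnew : newP l w c
        · rw [if_pos hnew] at hmem
          simp at hmem
          subst hmem
          obtain ⟨h1, h2, h3⟩ := hnew
          have heq : n - l - 1 + l + 1 = n := by omega
          refine ⟨by omega, by omega, ?_, ?_⟩
          · intro j hj
            rw [hget (n-l-1+1+j) (by omega), hget (n-l-1) (by omega)]
            have e1 : n - l - 1 + 1 + j = n - l + j := by omega
            rw [e1]; exact h2 j hj
          · rw [heq, hgetn, hget (n-l-1) (by omega)]
            exact h3
        · rw [if_neg hnew] at hmem; simp at hmem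
  have hdisj : Disjoint ((Finset.range n).filter (fun i =>
      i + l + 1 < n ∧
      (∀ j, j < l → w.getD (i + 1 + j) 0 = w.getD i 0 + 1) ∧
      w.getD (i + l + 1) 0 ≤ w.getD i 0))
      (if newP l w c then ({n - l - 1} : Finset ℕ) else ∅) := by
    by_cases hnew : newP l w c
    · rw [if_pos hnew]
      simp only [Finset.disjoint_singleton_right, Finset.mem_filter, Finset.mem_range]
      rintro ⟨_, h, _⟩
      obtain ⟨h1, _, _⟩ := hnew
      omega
    · rw [if_neg hnew]; exact Finset.disjoint_empty_right _
  unfold lPeaks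
  rw [hsplit, Finset.card_union_of_disjoint hdisj]
  congr 1
  by_cases hnew : newP l w c <;> simp [hnew]
def gP (l : ℕ) (r : List ℕ) : ℕ := lPeaks l r.reverse

def patt (l : ℕ) (r : List ℕ) : Prop :=
  l + 1 ≤ r.length ∧ ∀ j, j < l → r.getD j 0 = r.getD l 0 + 1

instance (l : ℕ) (r : List ℕ) : Decidable (patt l r) := by
  unfold patt; exact inferInstance

lemma newP_iff {l : ℕ} (hl : 1 ≤ l) (r : List ℕ) (c : ℕ) :
    newP l r.reverse c ↔ patt l r ∧ c ≤ r.getD l 0 := by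
  set n := r.length with hn
  have hlen : r.reverse.length = n := by simp [hn]
  have hgd : ∀ i, i < n → r.reverse.getD i 0 = r.getD (n - 1 - i) 0 := fun i hi =>
    getD_reverse (by omega)
  unfold newP patt
  rw [hlen]
  constructor
  · rintro ⟨h1, h2, h3⟩
    have he : n - 1 - (n - l - 1) = l := by omega
    refine ⟨⟨h1, ?_⟩, ?_⟩
    · intro j hj
      have := h2 (l - 1 - j) (by omega)
      rw [hgd (n - l + (l-1-j)) (by omega), hgd (n - l - 1) (by omega), he] at this
      have e : n - 1 - (n - l + (l - 1 - j)) = j := by omega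
      rwa [e] at this
    · have := h3
      rwa [hgd (n - l - 1) (by omega), he] at this
  · rintro ⟨⟨h1, h2⟩, h3⟩
    have he : n - 1 - (n - l - 1) = l := by omega
    refine ⟨h1, ?_, ?_⟩
    · intro j hj
      rw [hgd (n - l + j) (by omega), hgd (n - l - 1) (by omega), he]
      have e : n - 1 - (n - l + j) = l - 1 - j := by omega
      rw [e]
      exact h2 (l - 1 - j) (by omega)
    · rw [hgd (n - l - 1) (by omega), he]
      exact h3

lemma gP_cons {l : ℕ} (hl : 1 ≤ l) (r : List ℕ) (c : ℕ) :
    gP l (c :: r) = gP l r + (if patt l r ∧ c ≤ r.getD l 0 then 1 else 0) := by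
  unfold gP
  have : (c :: r).reverse = r.reverse ++ [c] := by simp
  rw [this, lPeaks_append l hl r.reverse c]
  congr 1
  by_cases h : newP l r.reverse c
  · rw [if_pos h, if_pos ((newP_iff hl r c).mp h)]
  · rw [if_neg h, if_neg (fun hc => h ((newP_iff hl r c).mpr hc))]
lemma sum_catF_succ {n : ℕ} (hn : 1 ≤ n) (f : List ℕ → ℕ) :
    ∑ r ∈ catF (n+1), f r = ∑ r ∈ catF n, ∑ c ∈ Finset.range (r.headD 0 + 2), f (c :: r) := by
  obtain ⟨s, rfl⟩ : ∃ s, n = s + 1 := ⟨n-1, by omega⟩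
  show ∑ r ∈ catF (s+2), f r = _
  rw [catF]
  rw [Finset.sum_biUnion]
  · apply Finset.sum_congr rfl
    intro r hr
    exact Finset.sum_image (fun a _ b _ hab => (List.cons.inj hab).1)
  · intro r1 h1 r2 h2 hne
    simp only [Finset.disjoint_left, Finset.mem_image, Finset.mem_range]
    rintro x ⟨c1, _, rfl⟩ ⟨c2, _, heq⟩
    exact hne ((List.cons.inj heq.symm).2)

lemma sum_fiber (n : ℕ) (f : List ℕ → ℕ) :
    ∑ r ∈ catF n, f r =
      ∑ k ∈ Finset.range n, ∑ r ∈ (catF n).filter (fun r => r.headD 0 = k), f r :=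
  (Finset.sum_fiberwise_of_maps_to (fun r hr => Finset.mem_range.mpr (catF_head_lt n r hr)) f).symm

def cF (n k : ℕ) : ℕ := ((catF n).filter (fun r => r.headD 0 = k)).card

def pF (l n k : ℕ) : ℕ := ∑ r ∈ (catF n).filter (fun r => r.headD 0 = k), gP l r

lemma sum_head_ite (n : ℕ) (F : List ℕ → ℕ) (p : ℕ → Prop) [DecidablePred p]
    (G : ℕ → ℕ) (hG : ∀ k, G k = ∑ r ∈ (catF n).filter (fun r => r.headD 0 = k), F r) :
    ∑ r ∈ catF n, (if p (r.headD 0) then F r else 0) =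
      ∑ k ∈ Finset.range n, if p k then G k else 0 := by
  rw [sum_fiber n (fun r => if p (r.headD 0) then F r else 0)]
  apply Finset.sum_congr rfl
  intro k _
  by_cases hp : p k
  · rw [if_pos hp, hG k]
    apply Finset.sum_congr rfl
    intro r hr
    have : r.headD 0 = k := (Finset.mem_filter.mp hr).2
    rw [this, if_pos hp]
  · rw [if_neg hp]
    apply Finset.sum_eq_zero
    intro r hr
    have : r.headD 0 = k := (Finset.mem_filter.mp hr).2
    rw [this, if_neg hp]

lemma cF_succ {n : ℕ} (hn : 1 ≤ n) (k : ℕ) :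
    cF (n+1) k = ∑ j ∈ Finset.range n, if k ≤ j + 1 then cF n j else 0 := by
  have h1 : cF (n+1) k = ∑ r ∈ catF (n+1), (if r.headD 0 = k then 1 else 0) := by
    simp only [cF, Finset.card_filter]
  rw [h1, sum_catF_succ hn]
  have h2 : ∀ r : List ℕ, ∑ c ∈ Finset.range (r.headD 0 + 2), (if (c :: r).headD 0 = k then 1 else 0)
      = if k ≤ r.headD 0 + 1 then 1 else 0 := by
    intro r
    simp only [List.headD_cons]
    show (∑ c ∈ Finset.range (r.headD 0 + 2), if c = k then 1 else 0) = _
    rw [Finset.sum_ite_eq' (Finset.range (r.headD 0 + 2)) k (fun _ => 1)]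
    simp only [Finset.mem_range]
    congr 1
    simp only [eq_iff_iff]
    omega
  rw [Finset.sum_congr rfl (fun r _ => h2 r)]
  exact sum_head_ite n (fun _ => 1) (fun a => k ≤ a + 1) (fun j => cF n j)
    (fun j => by simp only [cF, Finset.card_filter]; exact (Finset.sum_filter _ _).symm)
lemma headD_eq_getD {r : List ℕ} (h : r ≠ []) : r.headD 0 = r.getD 0 0 := by
  cases r with
  | nil => simp at h
  | cons a t => simp

lemma pF_succ {l n : ℕ} (hl : 1 ≤ l) (hn : 1 ≤ n) (k : ℕ) :
    pF l (n+1) k = (∑ j ∈ Finset.range n, if k ≤ j + 1 then pF l n j else 0) +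
      ((catF n).filter (fun r => patt l r ∧ k ≤ r.getD l 0)).card := by
  have h1 : pF l (n+1) k = ∑ r ∈ catF (n+1), (if r.headD 0 = k then gP l r else 0) := by
    simp only [pF]; exact Finset.sum_filter _ _
  rw [h1, sum_catF_succ hn]
  have h2 : ∀ r ∈ catF n,
      (∑ c ∈ Finset.range (r.headD 0 + 2), (if (c :: r).headD 0 = k then gP l (c :: r) else 0))
      = (if k ≤ r.headD 0 + 1 then gP l r else 0)
        + (if patt l r ∧ k ≤ r.getD l 0 then 1 else 0) := by
    intro r hr
    simp only [List.headD_cons]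
    show (∑ c ∈ Finset.range (r.headD 0 + 2), if c = k then gP l (c :: r) else 0) = _
    rw [Finset.sum_congr rfl (fun c _ => by rw [gP_cons hl r c]),
      Finset.sum_ite_eq' (Finset.range (r.headD 0 + 2)) k
        (fun c => gP l r + (if patt l r ∧ c ≤ r.getD l 0 then 1 else 0))]
    simp only [Finset.mem_range]
    by_cases hk : k < r.headD 0 + 2
    · rw [if_pos hk, if_pos (by omega : k ≤ r.headD 0 + 1)]
    · rw [if_neg hk, if_neg (by omega : ¬ k ≤ r.headD 0 + 1)]
      have hno : ¬ (patt l r ∧ k ≤ r.getD l 0) := by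
        rintro ⟨⟨hlen, hp⟩, hkk⟩
        have h0 : r.getD 0 0 = r.getD l 0 + 1 := hp 0 (by omega)
        have hh : r.headD 0 = r.getD 0 0 := headD_eq_getD (catF_ne_nil hn hr)
        omega
      rw [if_neg hno]; rfl
  rw [Finset.sum_congr rfl h2, Finset.sum_add_distrib]
  congr 1
  · exact sum_head_ite n (gP l) (fun a => k ≤ a + 1) (pF l n) (fun j => rfl)
  · rw [Finset.card_filter]
lemma cons_mem_catF {n : ℕ} (hn : 1 ≤ n) {r : List ℕ} {c : ℕ} (hr : r ∈ catF n)
    (hc : c ≤ r.headD 0 + 1) : c :: r ∈ catF (n+1) :=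
  (mem_catF_succ hn _).mpr ⟨r, hr, c, hc, rfl⟩

lemma tail_mem_catF {q : ℕ} (hq : 1 ≤ q) {r : List ℕ} (hr : r ∈ catF (q+1)) :
    r.tail ∈ catF q := by
  obtain ⟨r', h', c, hc, rfl⟩ := (mem_catF_succ hq r).mp hr
  simpa using h'

lemma drop_mem_catF : ∀ j n, j + 1 ≤ n → ∀ r ∈ catF n, r.drop j ∈ catF (n - j) := by
  intro j
  induction j with
  | zero => intro n _ r hr; simpa using hr
  | succ j ih =>
    intro n hjn r hr
    have h2 := ih n (by omega) r hr
    have e : n - j = (n - (j+1)) + 1 := by omega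
    rw [e] at h2
    rw [← List.tail_drop]
    exact tail_mem_catF (by omega) h2

lemma replicate_mem_catF {m : ℕ} (hm : 1 ≤ m) {r : List ℕ} (hr : r ∈ catF m) :
    ∀ j, (List.replicate j (r.headD 0 + 1) ++ r) ∈ catF (m + j) ∧
      r.headD 0 ≤ (List.replicate j (r.headD 0 + 1) ++ r).headD 0 := by
  intro j
  induction j with
  | zero => exact ⟨by simpa using hr, le_refl _⟩
  | succ j ih =>
    have e : List.replicate (j+1) (r.headD 0 + 1) ++ r
        = (r.headD 0 + 1) :: (List.replicate j (r.headD 0 + 1) ++ r) := by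
      rw [List.replicate_succ]; rfl
    rw [e]
    constructor
    · show _ ∈ catF ((m + j) + 1)
      exact cons_mem_catF (by omega) ih.1 (by have := ih.2; omega)
    · simp [List.headD_cons]

lemma getD_rep_append_lt {l v : ℕ} {r' : List ℕ} {j : ℕ} (hj : j < l) :
    (List.replicate l v ++ r').getD j 0 = v := by
  rw [List.getD_append _ _ 0 j (by simpa)]
  rw [List.getD_eq_getElem _ 0 (by simpa)]
  exact List.getElem_replicate ..

lemma getD_rep_append_l {l v : ℕ} {r' : List ℕ} :
    (List.replicate l v ++ r').getD l 0 = r'.getD 0 0 := by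
  rw [List.getD_append_right _ _ 0 l (by simp)]
  simp

lemma cF_zero_of_le {m a : ℕ} (h : m ≤ a) : cF m a = 0 := by
  simp only [cF, Finset.card_eq_zero, Finset.filter_eq_empty_iff]
  intro r hr
  have := catF_head_lt m r hr
  omega

lemma Ek_eq {l n : ℕ} (hl : 1 ≤ l) (hn : 1 ≤ n) (k : ℕ) :
    ((catF n).filter (fun r => patt l r ∧ k ≤ r.getD l 0)).card
      = ∑ a ∈ Finset.range n, if k ≤ a then cF (n-l) a else 0 := by
  rcases Nat.lt_or_ge n (l+1) with hsm | hbig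
  · have hL : (catF n).filter (fun r => patt l r ∧ k ≤ r.getD l 0) = ∅ := by
      rw [Finset.filter_eq_empty_iff]
      rintro r hr ⟨⟨hlen, _⟩, _⟩
      have := catF_length n r hr
      omega
    have hml : n - l = 0 := by omega
    rw [hL, hml]
    simp [cF_zero_of_le (Nat.zero_le _)]
  · set m := n - l with hm
    have hm1 : 1 ≤ m := by omega
    have hmn : m + l = n := by omega
    -- bijection with (catF m).filter (fun u => k ≤ u.headD 0)
    have hcard : ((catF n).filter (fun r => patt l r ∧ k ≤ r.getD l 0)).card
        = ((catF m).filter (fun u => k ≤ u.headD 0)).card := by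
      refine Finset.card_bij' (fun r _ => r.drop l)
        (fun u _ => List.replicate l (u.headD 0 + 1) ++ u) ?hi ?hj ?li ?ri
      case hi =>
        rintro r hr
        rw [Finset.mem_filter] at hr ⊢
        obtain ⟨hmem, ⟨hlen, hp⟩, hk⟩ := hr
        have hrl : r.length = n := catF_length n r hmem
        have hd : r.drop l ∈ catF m := by
          have := drop_mem_catF l n (by omega) r hmem
          rwa [← hm] at this
        refine ⟨hd, ?_⟩
        have hne : r.drop l ≠ [] := catF_ne_nil hm1 hd
        have : (r.drop l).headD 0 = r.getD l 0 := by
          rw [headD_eq_getD hne, List.getD_eq_getElem _ 0 (by simp; omega),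
            List.getD_eq_getElem _ 0 (by omega)]
          have := List.getElem_drop (xs := r) (i := l) (j := 0) (h := by simp; omega)
          simpa using this
        omega
      case hj =>
        rintro u hu
        rw [Finset.mem_filter] at hu ⊢
        obtain ⟨hmem, hk⟩ := hu
        have hul : u.length = m := catF_length m u hmem
        have hrep := (replicate_mem_catF hm1 hmem l).1
        rw [hmn] at hrep
        refine ⟨hrep, ⟨?_, ?_⟩, ?_⟩
        · simp [hul]; omega
        · intro j hj
          rw [getD_rep_append_lt hj, getD_rep_append_l,
            ← headD_eq_getD (catF_ne_nil hm1 hmem)]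
        · rw [getD_rep_append_l, ← headD_eq_getD (catF_ne_nil hm1 hmem)]
          exact hk
      case li =>
        rintro r hr
        rw [Finset.mem_filter] at hr
        obtain ⟨hmem, ⟨hlen, hp⟩, hk⟩ := hr
        have hrl : r.length = n := catF_length n r hmem
        have hd : r.drop l ∈ catF m := by
          have := drop_mem_catF l n (by omega) r hmem
          rwa [← hm] at this
        have hne : r.drop l ≠ [] := catF_ne_nil hm1 hd
        have hhead : (r.drop l).headD 0 = r.getD l 0 := by
          rw [headD_eq_getD hne, List.getD_eq_getElem _ 0 (by simp; omega),
            List.getD_eq_getElem _ 0 (by omega)]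
          have := List.getElem_drop (xs := r) (i := l) (j := 0) (h := by simp; omega)
          simpa using this
        rw [hhead]
        apply List.ext_getElem
        · simp; omega
        · intro i h1 h2
          rcases Nat.lt_or_ge i l with hil | hil
          · rw [List.getElem_append_left (by simpa)]
            rw [List.getElem_replicate]
            have := hp i hil
            rw [List.getD_eq_getElem _ 0 (by omega), List.getD_eq_getElem _ 0 (by omega)] at this
            have hgl : r.getD l 0 = r[l]'(by omega) := List.getD_eq_getElem _ 0 (by omega)
            omega
          · rw [List.getElem_append_right (by simpa)]
            simp only [List.length_replicate]
            have := List.getElem_drop (xs := r) (i := l) (j := i - l) (h := by simp at h1 ⊢; omega)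
            rw [this]
            congr 1
            omega
      case ri =>
        rintro u hu
        exact List.drop_left' (by simp)
    rw [hcard]
    have h2 : ((catF m).filter (fun u => k ≤ u.headD 0)).card
        = ∑ r ∈ catF m, (if k ≤ r.headD 0 then 1 else 0) := by
      rw [Finset.card_filter]
    rw [h2, sum_head_ite m (fun _ => 1) (fun a => k ≤ a) (cF m)
      (fun j => by simp only [cF, Finset.card_filter]; exact (Finset.sum_filter _ _).symm)]
    apply Finset.sum_subset
    · exact Finset.range_subset_range.mpr (by omega)
    · intro a _ ha
      rw [Finset.mem_range, not_lt] at ha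
      rw [cF_zero_of_le (by omega)]
      simp
def ccl (n k : ℕ) : ℕ :=
  if k < n then Nat.choose (2*n - k - 2) (n-1) - Nat.choose (2*n - k - 2) n else 0

def pcl (m k : ℕ) : ℕ :=
  if k + 2 ≤ m then (k+1) * Nat.choose (2*m - k - 3) (m - k - 2) else 0

lemma choose_right_le {M t : ℕ} (h : M ≤ 2*t + 1) : M.choose (t+1) ≤ M.choose t := by
  have h1 := Nat.choose_succ_right_eq M t
  have h2 : M.choose t * (M - t) ≤ M.choose t * (t+1) :=
    Nat.mul_le_mul_left _ (by omega)
  have h3 : M.choose (t+1) * (t+1) ≤ M.choose t * (t+1) := by rw [h1]; exact h2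
  exact Nat.le_of_mul_le_mul_right h3 (by omega)

lemma pascal {a b M k : ℕ} (ha : a = M + 1) (hb : b = k + 1) :
    Nat.choose a b = Nat.choose M k + Nat.choose M b := by
  subst ha; subst hb; exact Nat.choose_succ_succ M k

lemma symm_h {M a b : ℕ} (h : b ≤ M) (hab : a = M - b) : Nat.choose M a = Nat.choose M b := by
  subst hab; exact Nat.choose_symm h

lemma ccl_add {n k : ℕ} (h : k < n) :
    ccl n k + Nat.choose (2*n-k-2) n = Nat.choose (2*n-k-2) (n-1) := by
  rw [ccl, if_pos h]
  have hle : Nat.choose (2*n-k-2) n ≤ Nat.choose (2*n-k-2) (n-1) := by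
    have e : n = (n-1) + 1 := by omega
    rw [e]
    exact choose_right_le (by omega)
  omega

lemma ccl_zero {n k : ℕ} (h : n ≤ k) : ccl n k = 0 := by rw [ccl, if_neg (by omega)]

lemma pcl_zero {m k : ℕ} (h : m < k + 2) : pcl m k = 0 := by rw [pcl, if_neg (by omega)]

lemma G_lemma : ∀ d n i, 1 ≤ n → i + d = n →
    (∑ j ∈ Finset.Ico i n, ccl n j) + Nat.choose (2*n-i-1) (n+1) = Nat.choose (2*n-i-1) n := by
  intro d
  induction d with
  | zero =>
    intro n i hn hi
    have : i = n := by omega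
    subst this
    rw [Finset.Ico_self, Finset.sum_empty]
    have e : 2*i - i - 1 = i - 1 := by omega
    rw [e, Nat.choose_eq_zero_of_lt (by omega), Nat.choose_eq_zero_of_lt (by omega)]
  | succ d ih =>
    intro n i hn hi
    rw [Finset.sum_eq_sum_Ico_succ_bot (by omega : i < n)]
    have IH := ih n (i+1) hn (by omega)
    have e1 : 2*n - (i+1) - 1 = 2*n - i - 2 := by omega
    rw [e1] at IH
    have hccl := ccl_add (show i < n by omega)
    have p1 : Nat.choose (2*n-i-1) n = Nat.choose (2*n-i-2) (n-1) + Nat.choose (2*n-i-2) n :=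
      pascal (by omega) (by omega)
    have p2 : Nat.choose (2*n-i-1) (n+1)
        = Nat.choose (2*n-i-2) n + Nat.choose (2*n-i-2) (n+1) :=
      pascal (by omega) (by omega)
    omega

lemma T_lemma : ∀ d m i, i + 2 + d = m →
    (∑ j ∈ Finset.Ico i m, pcl m j) + Nat.choose (2*m-i-2) m
      = (i+2) * Nat.choose (2*m-i-2) (m-i-2) + Nat.choose (2*m-i-2) (m+1) := by
  intro d
  induction d with
  | zero =>
    intro m i hi
    have hm : m = i + 2 := by omega
    subst hm
    rw [Finset.sum_eq_sum_Ico_succ_bot (by omega : i < i+2),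
      Finset.sum_eq_sum_Ico_succ_bot (by omega : i+1 < i+2), Finset.Ico_self,
      Finset.sum_empty]
    have h1 : pcl (i+2) i = i + 1 := by
      rw [pcl, if_pos (by omega)]
      have e : 2*(i+2) - i - 3 = i + 1 := by omega
      have e2 : i + 2 - i - 2 = 0 := by omega
      rw [e, e2, Nat.choose_zero_right, Nat.mul_one]
    have h2 : pcl (i+2) (i+1) = 0 := pcl_zero (by omega)
    have e : 2*(i+2) - i - 2 = i + 2 := by omega
    have e2 : i + 2 - i - 2 = 0 := by omega
    rw [h1, h2, e, e2, Nat.choose_self, Nat.choose_zero_right,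
      Nat.choose_eq_zero_of_lt (by omega)]
    ring
  | succ d ih =>
    intro m i hi
    rw [Finset.sum_eq_sum_Ico_succ_bot (by omega : i < m)]
    have IH := ih m (i+1) (by omega)
    have e1 : 2*m - (i+1) - 2 = 2*m - i - 3 := by omega
    have e2 : m - (i+1) - 2 = m - i - 3 := by omega
    rw [e1, e2] at IH
    -- symmetry facts
    have s1 : Nat.choose (2*m-i-3) (m-1) = Nat.choose (2*m-i-3) (m-i-2) :=
      ((symm_h (show m-1 ≤ 2*m-i-3 by omega) (by omega)).symm : _)
    have s2 : Nat.choose (2*m-i-3) m = Nat.choose (2*m-i-3) (m-i-3) :=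
      ((symm_h (show m ≤ 2*m-i-3 by omega) (by omega)).symm : _)
    rw [s2] at IH
    have hpcl : pcl m i = (i+1) * Nat.choose (2*m-i-3) (m-i-2) := by
      rw [pcl, if_pos (by omega)]
    have p1 : Nat.choose (2*m-i-2) (m-i-2)
        = Nat.choose (2*m-i-3) (m-i-3) + Nat.choose (2*m-i-3) (m-i-2) :=
      pascal (by omega) (by omega)
    have p2 : Nat.choose (2*m-i-2) m
        = Nat.choose (2*m-i-3) (m-i-2) + Nat.choose (2*m-i-3) (m-i-3) := by
      have := pascal (a := 2*m-i-2) (b := m) (M := 2*m-i-3) (k := m-1) (by omega) (by omega)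
      rw [this, s1, s2]
    have p3 : Nat.choose (2*m-i-2) (m+1)
        = Nat.choose (2*m-i-3) (m-i-3) + Nat.choose (2*m-i-3) (m+1) := by
      have := pascal (a := 2*m-i-2) (b := m+1) (M := 2*m-i-3) (k := m) (by omega) (by omega)
      rw [this, s2]
    -- name the atoms
    set A := Nat.choose (2*m-i-3) (m-i-2) with hA
    set B := Nat.choose (2*m-i-3) (m-i-3) with hB
    set D := Nat.choose (2*m-i-3) (m+1) with hD
    have hS : ∑ j ∈ Finset.Ico (i+1) m, pcl m j = (i+2)*B + D := by
      have h' : (∑ j ∈ Finset.Ico (i+1) m, pcl m j) + B = ((i+2)*B + D) + B := by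
        rw [IH]; ring
      exact Nat.add_right_cancel h'
    rw [hpcl, hS, p1, p2, p3]
    ring
lemma sum_ite_le1 (f : ℕ → ℕ) (k N : ℕ) :
    (∑ j ∈ Finset.range N, if k ≤ j + 1 then f j else 0) = ∑ j ∈ Finset.Ico (k-1) N, f j := by
  rw [← Finset.sum_filter]
  congr 1
  ext j
  simp only [Finset.mem_filter, Finset.mem_range, Finset.mem_Ico]
  omega

lemma sum_ite_le0 (f : ℕ → ℕ) (k N : ℕ) :
    (∑ a ∈ Finset.range N, if k ≤ a then f a else 0) = ∑ a ∈ Finset.Ico k N, f a := by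
  rw [← Finset.sum_filter]
  congr 1
  ext j
  simp only [Finset.mem_filter, Finset.mem_range, Finset.mem_Ico]
  omega

lemma Ico_split_zero (f : ℕ → ℕ) (a b N : ℕ) (hab : a ≤ b) (hbN : b ≤ N)
    (h : ∀ j, b ≤ j → f j = 0) :
    ∑ j ∈ Finset.Ico a N, f j = ∑ j ∈ Finset.Ico a b, f j := by
  rw [← Finset.sum_Ico_consecutive f hab hbN]
  have : ∑ j ∈ Finset.Ico b N, f j = 0 :=
    Finset.sum_eq_zero (fun j hj => h j (Finset.mem_Ico.mp hj).1)
  omega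

lemma CI' {n N : ℕ} (hn : 1 ≤ n) (hN : n ≤ N) (k : ℕ) :
    (∑ j ∈ Finset.range N, if k ≤ j + 1 then ccl n j else 0) = ccl (n+1) k := by
  rw [sum_ite_le1]
  rcases le_or_gt (k-1) n with hk | hk
  · rw [Ico_split_zero _ _ _ _ hk hN (fun j hj => ccl_zero hj)]
    have G := G_lemma (n - (k-1)) n (k-1) hn (by omega)
    rcases le_or_gt k n with hkn | hkn
    · rcases Nat.eq_zero_or_pos k with rfl | hk1
      · -- k = 0
        have p1 : Nat.choose (2*n) n = Nat.choose (2*n-1) (n-1) + Nat.choose (2*n-1) n :=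
          pascal (by omega) (by omega)
        have p2 : Nat.choose (2*n) (n+1) = Nat.choose (2*n-1) n + Nat.choose (2*n-1) (n+1) :=
          pascal (by omega) (by omega)
        have s : Nat.choose (2*n-1) (n-1) = Nat.choose (2*n-1) n :=
          symm_h (show n ≤ 2*n-1 by omega) (by omega)
        rw [ccl, if_pos (by omega)]
        have e1 : 2*n - (0:ℕ) - 1 = 2*n-1 := by omega
        have e2 : 2*(n+1) - (0:ℕ) - 2 = 2*n := by omega
        have e3 : n + 1 - 1 = n := by omega
        rw [e2, e3]
        rw [e1] at G
        omega
      · -- 1 ≤ k ≤ n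
        have e1 : 2*n - (k-1) - 1 = 2*n - k := by omega
        rw [e1] at G
        rw [ccl, if_pos (by omega)]
        have e2 : 2*(n+1) - k - 2 = 2*n - k := by omega
        have e3 : n + 1 - 1 = n := by omega
        rw [e2, e3]
        omega
    · -- k = n + 1
      have hk2 : k = n + 1 := by omega
      subst hk2
      have e : n + 1 - 1 = n := by omega
      rw [e, Finset.Ico_self, Finset.sum_empty, ccl, if_neg (by omega)]
  · -- k - 1 > n : everything vanishes
    have h0 : ∑ j ∈ Finset.Ico (k-1) N, ccl n j = 0 :=
      Finset.sum_eq_zero (fun j hj => ccl_zero (by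
        have := (Finset.mem_Ico.mp hj).1; omega))
    rw [h0, ccl, if_neg (by omega)]

lemma PI' {m N : ℕ} (hN : m ≤ N) (k : ℕ) :
    ((∑ j ∈ Finset.range N, if k ≤ j + 1 then pcl m j else 0) +
      (∑ a ∈ Finset.range N, if k ≤ a then ccl m a else 0)) = pcl (m+1) k := by
  rw [sum_ite_le1, sum_ite_le0]
  rcases Nat.eq_zero_or_pos m with rfl | hm1
  · have h1 : ∑ j ∈ Finset.Ico (k-1) N, pcl 0 j = 0 :=
      Finset.sum_eq_zero (fun j _ => pcl_zero (by omega))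
    have h2 : ∑ a ∈ Finset.Ico k N, ccl 0 a = 0 :=
      Finset.sum_eq_zero (fun a _ => ccl_zero (by omega))
    rw [h1, h2, pcl, if_neg (by omega)]
  rcases le_or_gt m k with hk | hk
  · -- k ≥ m : all zero
    have h1 : ∑ j ∈ Finset.Ico (k-1) N, pcl m j = 0 :=
      Finset.sum_eq_zero (fun j hj => pcl_zero (by
        have := (Finset.mem_Ico.mp hj).1; omega))
    have h2 : ∑ a ∈ Finset.Ico k N, ccl m a = 0 :=
      Finset.sum_eq_zero (fun a ha => ccl_zero (by
        have := (Finset.mem_Ico.mp ha).1; omega))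
    rw [h1, h2, pcl, if_neg (by omega)]
  · -- k + 1 ≤ m
    have hsum1 : ∑ j ∈ Finset.Ico (k-1) N, pcl m j = ∑ j ∈ Finset.Ico (k-1) m, pcl m j :=
      Ico_split_zero _ _ _ _ (by omega) hN (fun j hj => pcl_zero (by omega))
    have hsum2 : ∑ a ∈ Finset.Ico k N, ccl m a = ∑ a ∈ Finset.Ico k m, ccl m a :=
      Ico_split_zero _ _ _ _ (by omega) hN (fun a ha => ccl_zero ha)
    rw [hsum1, hsum2]
    have G := G_lemma (m - k) m k hm1 (by omega)
    rcases Nat.lt_or_ge m 2 with hm2 | hm2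
    · -- m = 1, k = 0
      have hm : m = 1 := by omega
      have hk0 : k = 0 := by omega
      subst hm; subst hk0
      decide
    · -- m ≥ 2
      have T := T_lemma (m - (k-1) - 2) m (k-1) (by omega)
      rcases Nat.eq_zero_or_pos k with rfl | hk1
      · -- k = 0
        have e0 : (0:ℕ) - 1 = 0 := by omega
        rw [e0] at T ⊢
        have e1 : 2*m - (0:ℕ) - 2 = 2*m - 2 := by omega
        have e2 : m - (0:ℕ) - 2 = m - 2 := by omega
        have e3 : 2*m - (0:ℕ) - 1 = 2*m - 1 := by omega
        rw [e1, e2] at T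
        rw [e3] at G
        rw [pcl, if_pos (by omega)]
        have e4 : 2*(m+1) - (0:ℕ) - 3 = 2*m - 1 := by omega
        have e5 : m + 1 - (0:ℕ) - 2 = m - 1 := by omega
        rw [e4, e5, Nat.one_mul]
        have p1 : Nat.choose (2*m-1) (m-1) = Nat.choose (2*m-2) (m-2) + Nat.choose (2*m-2) (m-1) :=
          pascal (by omega) (by omega)
        have p2 : Nat.choose (2*m-1) m = Nat.choose (2*m-2) (m-1) + Nat.choose (2*m-2) m :=
          pascal (by omega) (by omega)
        have p3 : Nat.choose (2*m-1) (m+1) = Nat.choose (2*m-2) m + Nat.choose (2*m-2) (m+1) :=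
          pascal (by omega) (by omega)
        have s : Nat.choose (2*m-2) m = Nat.choose (2*m-2) (m-2) :=
          symm_h (show m-2 ≤ 2*m-2 by omega) (by omega)
        omega
      · -- 1 ≤ k ≤ m-1
        have e1 : 2*m - (k-1) - 2 = 2*m - k - 1 := by omega
        have e2 : m - (k-1) - 2 = m - k - 1 := by omega
        have e3 : (k-1) + 2 = k + 1 := by omega
        rw [e1, e2, e3] at T
        have e4 : 2*m - k - 1 = 2*m - k - 1 := rfl
        rw [pcl, if_pos (by omega)]
        have e5 : 2*(m+1) - k - 3 = 2*m - k - 1 := by omega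
        have e6 : m + 1 - k - 2 = m - k - 1 := by omega
        rw [e5, e6]
        generalize hP : (k+1) * Nat.choose (2*m-k-1) (m-k-1) = P at T ⊢
        omega

lemma FI {m N : ℕ} (hm : 2 ≤ m) (hN : m ≤ N) :
    ∑ k ∈ Finset.range N, pcl m k = Nat.choose (2*m-1) (m-2) := by
  have hr : ∑ k ∈ Finset.range N, pcl m k = ∑ k ∈ Finset.Ico 0 m, pcl m k := by
    rw [Finset.range_eq_Ico]
    exact Ico_split_zero _ _ _ _ (by omega) hN (fun j hj => pcl_zero (by omega))
  rw [hr]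
  have T := T_lemma (m - 2) m 0 (by omega)
  have e1 : 2*m - (0:ℕ) - 2 = 2*m - 2 := by omega
  have e2 : m - (0:ℕ) - 2 = m - 2 := by omega
  rw [e1, e2] at T
  rcases Nat.lt_or_ge m 3 with hm3 | hm3
  · -- m = 2
    have hm2 : m = 2 := by omega
    subst hm2
    decide
  · have p1 : Nat.choose (2*m-1) (m-2) = Nat.choose (2*m-2) (m-3) + Nat.choose (2*m-2) (m-2) :=
      pascal (by omega) (by omega)
    have s1 : Nat.choose (2*m-2) m = Nat.choose (2*m-2) (m-2) :=
      symm_h (show m-2 ≤ 2*m-2 by omega) (by omega)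
    have s2 : Nat.choose (2*m-2) (m+1) = Nat.choose (2*m-2) (m-3) :=
      symm_h (show m-3 ≤ 2*m-2 by omega) (by omega)
    omega
lemma cF_closed : ∀ n k, cF n k = ccl n k := by
  intro n
  induction n with
  | zero =>
    intro k
    rw [ccl, if_neg (by omega)]
    simp [cF, catF]
  | succ n ih =>
    intro k
    rcases Nat.eq_zero_or_pos n with rfl | hn
    · -- n + 1 = 1
      rw [ccl]
      by_cases hk : k = 0
      · subst hk
        rw [if_pos (by omega)]
        decide
      · rw [if_neg (by omega)]
        have : ((catF 1).filter (fun r => r.headD 0 = k)).card = 0 := by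
          rw [Finset.card_eq_zero, Finset.filter_eq_empty_iff]
          intro r hr
          simp [catF] at hr
          subst hr
          simpa using fun h => hk h.symm
        simpa [cF] using this
    · rw [cF_succ hn k]
      rw [Finset.sum_congr rfl (fun j _ => by rw [ih j])]
      exact CI' hn (le_refl n) k

lemma pF_closed {l : ℕ} (hl : 1 ≤ l) : ∀ n k, pF l n k = pcl (n - l) k := by
  intro n
  induction n with
  | zero =>
    intro k
    rw [pcl, if_neg (by omega)]
    simp [pF, catF]
  | succ n ih =>
    intro k
    rcases Nat.eq_zero_or_pos n with rfl | hn
    · -- length-1 words have no peaks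
      have hg : gP l [0] = 0 := by
        rw [gP]
        unfold lPeaks
        rw [Finset.card_eq_zero, Finset.filter_eq_empty_iff]
        intro i hi
        rintro ⟨h1, _, _⟩
        simp at h1
      have : pF l 1 k = 0 := by
        rw [pF]
        apply Finset.sum_eq_zero
        intro r hr
        rw [Finset.mem_filter] at hr
        have := hr.1
        simp [catF] at this
        subst this
        exact hg
      rw [this, pcl, if_neg (by omega)]
    · rw [pF_succ hl hn k, Ek_eq hl hn k]
      have hA : (∑ j ∈ Finset.range n, if k ≤ j + 1 then pF l n j else 0)
          = ∑ j ∈ Finset.range n, if k ≤ j + 1 then pcl (n-l) j else 0 :=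
        Finset.sum_congr rfl (fun j _ => by rw [ih j])
      have hB : (∑ a ∈ Finset.range n, if k ≤ a then cF (n-l) a else 0)
          = ∑ a ∈ Finset.range n, if k ≤ a then ccl (n-l) a else 0 :=
        Finset.sum_congr rfl (fun a _ => by rw [cF_closed (n-l) a])
      rw [hA, hB]
      rcases le_or_gt l n with hln | hln
      · have e : n + 1 - l = (n - l) + 1 := by omega
        rw [e]
        exact PI' (m := n - l) (N := n) (by omega) k
      · have e1 : n - l = 0 := by omega
        have e2 : n + 1 - l = 0 := by omega
        rw [e1, e2]
        have h1 : (∑ j ∈ Finset.range n, if k ≤ j + 1 then pcl 0 j else 0) = 0 :=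
          Finset.sum_eq_zero (fun j _ => by rw [pcl_zero (by omega)]; simp)
        have h2 : (∑ a ∈ Finset.range n, if k ≤ a then ccl 0 a else 0) = 0 :=
          Finset.sum_eq_zero (fun a _ => by rw [ccl_zero (by omega)]; simp)
        rw [h1, h2, pcl, if_neg (by omega)]

/-- For fixed `l ≥ 1`, the total number of `l`-peaks over all Catalan words of length
`n` equals `C(2(n-l)-1, n-l-2)` for `n ≥ l+2`, and is `0` for `1 ≤ n < l+2`. -/
theorem total_lPeaks (l : ℕ) (hl : 1 ≤ l) :
    (∀ n : ℕ, l + 2 ≤ n →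
      ∑ᶠ w ∈ CatalanWord n, lPeaks l w =
        Nat.choose (2 * (n - l) - 1) (n - l - 2)) ∧
    (∀ n : ℕ, 1 ≤ n → n < l + 2 →
      ∑ᶠ w ∈ CatalanWord n, lPeaks l w = 0) := by
  constructor
  · intro n hn
    rw [catalanWord_eq_image (by omega), finsum_mem_coe_finset,
      Finset.sum_image (fun x _ y _ h => List.reverse_injective h)]
    have h1 : ∑ r ∈ catF n, lPeaks l r.reverse = ∑ r ∈ catF n, gP l r := rfl
    rw [h1, sum_fiber n (gP l)]
    have h2 : ∀ k ∈ Finset.range n, (∑ r ∈ (catF n).filter (fun r => r.headD 0 = k), gP l r)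
        = pcl (n - l) k := fun k _ => pF_closed hl n k
    rw [Finset.sum_congr rfl h2]
    exact FI (by omega) (by omega)
  · intro n hn1 hn2
    have hz : ∀ w ∈ CatalanWord n, lPeaks l w = 0 := by
      intro w hw
      unfold lPeaks
      rw [Finset.card_eq_zero, Finset.filter_eq_empty_iff]
      intro i _
      rintro ⟨h1, _, _⟩
      have := hw.1
      omega
    rw [finsum_mem_congr rfl hz]
    simp
end

section
/- For all integers n ≥ 1, the total number of peaks over all Catalan words of length n equals Σ_{ℓ=1}^{n-1} C(2(n-ℓ)-1, n-ℓ-2), where a summand is taken to be 0 whenever n - ℓ - 2 < 0. -/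
/-- Total number of peaks of `w` (that is, `l`-peaks for all `l ≥ 1`). -/
def peaks (w : List ℕ) : ℕ :=
  ∑ l ∈ Finset.Icc 1 w.length, lPeaks l w


open Finset

def cb : ℕ → ℕ → ℕ
  | 0, _ => 0
  | 1, k => if k = 0 then 1 else 0
  | m+2, k => ∑ j ∈ Finset.Ico (k-1) (m+1), cb (m+1) j

def db : ℕ → ℕ → ℕ
  | 0, _ => 0
  | 1, _ => 0
  | m+2, k => (∑ j ∈ Finset.Ico (k-1) (m+1), db (m+1) j) + cb (m+2) (k+1)

lemma cb_zero : ∀ m k, m ≤ k → cb m k = 0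
  | 0, k, h => rfl
  | 1, k, h => by simp only [cb]; split <;> omega
  | m+2, k, h => by
      simp only [cb]
      apply Finset.sum_eq_zero
      intro j hj
      simp only [Finset.mem_Ico] at hj
      exact cb_zero (m+1) j (by omega)

lemma cb_diag : ∀ k, cb (k+1) k = 1
  | 0 => rfl
  | k+1 => by
      show cb (k+2) (k+1) = 1
      simp only [cb]
      rw [show k+1-1 = k from rfl, Nat.Ico_succ_singleton, Finset.sum_singleton, cb_diag k]

lemma cb_split (m k : ℕ) : cb (m+2) (k+1) = cb (m+1) k + cb (m+2) (k+2) := by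
  rcases le_or_gt (m+1) k with h | h
  · rw [cb_zero (m+2) (k+1) (by omega), cb_zero (m+1) k (by omega),
      cb_zero (m+2) (k+2) (by omega)]
  · simp only [cb]
    rw [show k+1-1 = k from rfl, show k+2-1 = k+1 from rfl,
      Finset.sum_eq_sum_Ico_succ_bot h]

lemma cb_zerohead (m : ℕ) : cb (m+2) 0 = cb (m+2) 1 := by
  simp only [cb]

lemma pascal_s18 (n r : ℕ) : Nat.choose (n+1) (r+1) = Nat.choose n r + Nat.choose n (r+1) :=
  Nat.choose_succ_succ n r

lemma cbA : ∀ a k, cb (k+a+1) k + Nat.choose (k+2*a) (k+a+1) = Nat.choose (k+2*a) a := by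
  intro a
  induction a with
  | zero =>
      intro k
      rw [show k+0+1 = k+1 from rfl, cb_diag]
      rw [Nat.choose_eq_zero_of_lt (by omega)]
      simp
  | succ a ih =>
      intro k
      induction k with
      | zero =>
          have h1 := ih 1
          have hz : cb (a+2) 0 = cb (a+2) 1 := cb_zerohead a
          have p1 : Nat.choose ((1+2*a)+1) (a+1) = Nat.choose (1+2*a) a + Nat.choose (1+2*a) (a+1) :=
            pascal_s18 _ _
          have p2 : Nat.choose ((1+2*a)+1) ((a+1)+1) = Nat.choose (1+2*a) (a+1) + Nat.choose (1+2*a) (a+2) :=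
            pascal_s18 _ _
          ring_nf at h1 hz p1 p2 ⊢
          omega
      | succ k ihk =>
          have hs : cb ((k+a+1)+2) (k+1) = cb ((k+a+1)+1) k + cb ((k+a+1)+2) (k+2) :=
            cb_split (k+a+1) k
          have h2 := ih (k+2)
          have p1 : Nat.choose ((k+2+2*a)+1) (a+1) = Nat.choose (k+2+2*a) a + Nat.choose (k+2+2*a) (a+1) :=
            pascal_s18 _ _
          have p2 : Nat.choose ((k+2+2*a)+1) ((k+2+a)+1) = Nat.choose (k+2+2*a) (k+2+a) + Nat.choose (k+2+2*a) (k+2+a+1) :=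
            pascal_s18 _ _
          ring_nf at hs h2 p1 p2 ihk ⊢
          omega


lemma choose_symm' (n k k' : ℕ) (h : k + k' = n) : Nat.choose n k = Nat.choose n k' := by
  subst h
  have h2 := Nat.choose_symm (show k ≤ k + k' by omega)
  rw [show k+k'-k = k' from by omega] at h2
  exact h2.symm

lemma db_zero : ∀ m k, m ≤ k+1 → db m k = 0
  | 0, k, h => rfl
  | 1, k, h => rfl
  | m+2, k, h => by
      simp only [db]
      have hz : (∑ j ∈ Finset.Ico (k-1) (m+1), db (m+1) j) = 0 :=
        Finset.sum_eq_zero (fun j hj => by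
          simp only [Finset.mem_Ico] at hj
          exact db_zero (m+1) j (by omega))
      rw [cb_zero (m+2) (k+1) (by omega), hz]

lemma db_split (m k : ℕ) :
    db (m+2) (k+1) + cb (m+2) (k+3) = db (m+1) k + db (m+2) (k+2) + cb (m+2) (k+2) := by
  have e1 : db (m+2) (k+1) = (∑ j ∈ Finset.Ico k (m+1), db (m+1) j) + cb (m+2) (k+2) := by
    simp only [db]; rw [show k+1-1 = k from rfl]
  have e2 : db (m+2) (k+2) = (∑ j ∈ Finset.Ico (k+1) (m+1), db (m+1) j) + cb (m+2) (k+3) := by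
    simp only [db]; rw [show k+2-1 = k+1 from rfl]
  rcases le_or_gt (m+1) k with h | h
  · rw [e1, e2, db_zero (m+1) k (by omega), Finset.Ico_eq_empty (by omega),
      Finset.Ico_eq_empty (by omega)]
    simp; omega
  · rw [e1, e2, Finset.sum_eq_sum_Ico_succ_bot h]
    omega

lemma db_zerohead (m : ℕ) : db (m+2) 0 + cb (m+2) 2 = db (m+2) 1 + cb (m+2) 1 := by
  have e1 : db (m+2) 0 = (∑ j ∈ Finset.Ico 0 (m+1), db (m+1) j) + cb (m+2) 1 := by
    simp only [db]
  have e2 : db (m+2) 1 = (∑ j ∈ Finset.Ico 0 (m+1), db (m+1) j) + cb (m+2) 2 := by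
    simp only [db]
  omega

lemma db_diag0 : ∀ k, db (k+2) k = k+1
  | 0 => by
      show db 2 0 = 1
      simp only [db]
      have : cb 2 1 = 1 := cb_diag 1
      simp [this]
  | k+1 => by
      have hs := db_split (k+1) k
      have h0 := db_diag0 k
      have h1 := cb_zero (k+1+2) (k+3) (by omega)
      have h2 := db_zero (k+1+2) (k+2) (by omega)
      have h3 : cb (k+2+1) (k+2) = 1 := cb_diag (k+2)
      ring_nf at hs h0 h1 h2 h3 ⊢
      omega

lemma dbA : ∀ a k, db (k+a+2) k = (k+1) * Nat.choose (k+2*a+1) a := by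
  intro a
  induction a with
  | zero =>
      intro k
      rw [show k+0+2 = k+2 from rfl, db_diag0]
      simp
  | succ a ih =>
      intro k
      induction k with
      | zero =>
          -- target: db (a+3) 0 = 1 * C(2a+3, a+1)
          have hz := db_zerohead (a+1)
          have h1 := ih 1   -- db (a+3) 1 = 2 * C(2a+2, a)
          have hc1 := cbA (a+1) 1  -- cb (a+3) 1 + C(2a+3, a+3) = C(2a+3, a+1)
          have hc2 := cbA a 2      -- cb (a+3) 2 + C(2a+2, a+3) = C(2a+2, a)
          have p1 : Nat.choose (2*a+2+1) (a+2+1) = Nat.choose (2*a+2) (a+2) + Nat.choose (2*a+2) (a+3) :=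
            pascal_s18 _ _
          have s1 : Nat.choose (2*a+2) (a+2) = Nat.choose (2*a+2) a := choose_symm' _ _ _ (by omega)
          zify at hz h1 hc1 hc2 p1 s1 ⊢
          ring_nf at hz h1 hc1 hc2 p1 s1 ⊢
          omega
      | succ k ihk =>
          have hs := db_split (k+a+2) k
          have ih2 := ih (k+2)
          have hc2 := cbA (a+1) (k+2)
          have hc3 := cbA a (k+3)
          have pQ : Nat.choose (k+2*a+3+1) (a+1) = Nat.choose (k+2*a+3) a + Nat.choose (k+2*a+3) (a+1) := by
            have := pascal_s18 (k+2*a+3) a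
            convert this using 2
          have pP : Nat.choose (k+2*a+3+1) (k+a+3+1) = Nat.choose (k+2*a+3) (k+a+3) + Nat.choose (k+2*a+3) (k+a+4) :=
            pascal_s18 _ _
          have sS : Nat.choose (k+2*a+3) (k+a+3) = Nat.choose (k+2*a+3) a := choose_symm' _ _ _ (by omega)
          zify at hs ihk ih2 hc2 hc3 pQ pP sS ⊢
          ring_nf at hs ihk ih2 hc2 hc3 pQ pP sS ⊢
          linear_combination hs + ihk + ih2 + hc2 - hc3 - pP - sS - ((k:ℤ)+1)*pQ

lemma db_rowsum (m : ℕ) (hm : 2 ≤ m) :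
    (∑ j ∈ Finset.range m, db m j) + cb (m+1) 2 = db (m+1) 1 := by
  obtain ⟨m', rfl⟩ : ∃ m', m = m' + 2 := ⟨m - 2, by omega⟩
  have e : db (m'+1+2) 1 = (∑ j ∈ Finset.Ico 0 (m'+1+1), db (m'+1+1) j) + cb (m'+1+2) 2 := by
    simp only [db]
  rw [Finset.range_eq_Ico]
  ring_nf at e ⊢
  omega

lemma db_total (m : ℕ) (hm : 2 ≤ m) :
    ∑ j ∈ Finset.range m, db m j = Nat.choose (2*m-1) (m-2) := by
  obtain ⟨b, rfl⟩ : ∃ b, m = b + 2 := ⟨m - 2, by omega⟩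
  rw [show 2*(b+2)-1 = 2*b+3 from by omega, show b+2-2 = b from by omega]
  have hr := db_rowsum (b+2) (by omega)
  have h1 := dbA b 1       -- db (b+3) 1 = 2 * C(2b+2, b)
  have hc := cbA b 2       -- cb (b+3) 2 + C(2b+2, b+3) = C(2b+2, b)
  rcases b with _ | b'
  · have : ∑ j ∈ Finset.range 2, db 2 j = 1 := by
      rw [Finset.sum_range_succ, Finset.sum_range_succ, Finset.sum_range_zero]
      have e0 : db 2 0 = 1 := db_diag0 0
      have e1 : db 2 1 = 0 := db_zero 2 1 (by omega)
      omega
    simpa using this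
  · set b := b' + 1 with hb
    have p1 : Nat.choose (2*b+2+1) (b'+1) = Nat.choose (2*b+2) b' + Nat.choose (2*b+2) (b'+1) :=
      pascal_s18 _ _
    have s1 : Nat.choose (2*b+2) (b+3) = Nat.choose (2*b+2) b' := choose_symm' _ _ _ (by omega)
    rw [← hb] at p1
    zify at hr h1 hc p1 s1 ⊢
    ring_nf at hr h1 hc p1 s1 ⊢
    omega


def CF : ℕ → Finset (List ℕ)
  | 0 => ∅
  | 1 => {[0]}
  | m+2 => (CF (m+1)).biUnion fun w => (Finset.range (w.getLastD 0 + 2)).image fun k => w ++ [k]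

lemma getLastD_eq_getD (l : List ℕ) (h : l ≠ []) : l.getLastD 0 = l.getD (l.length - 1) 0 := by
  induction l using List.reverseRecOn with
  | nil => exact absurd rfl h
  | append_singleton l a ih =>
      rw [List.getLastD_concat]
      rw [List.length_append, List.length_singleton]
      rw [show l.length + 1 - 1 = l.length from by omega]
      rw [List.getD_append_right l [a] 0 l.length (le_refl _)]
      simp

lemma CF_length : ∀ n, ∀ w ∈ CF n, w.length = n
  | 0, w, hw => by simp [CF] at hw
  | 1, w, hw => by simp [CF] at hw; subst hw; rfl
  | m+2, w, hw => by
      simp only [CF, Finset.mem_biUnion, Finset.mem_image, Finset.mem_range] at hw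
      obtain ⟨u, hu, k, hk, rfl⟩ := hw
      rw [List.length_append, List.length_singleton, CF_length (m+1) u hu]

lemma CF_ne_nil (n : ℕ) (hn : 1 ≤ n) (w : List ℕ) (hw : w ∈ CF n) : w ≠ [] := by
  have := CF_length n w hw
  intro h; subst h; simp at this; omega

lemma CF_last_lt : ∀ n, ∀ w ∈ CF n, w.getLastD 0 < n
  | 0, w, hw => by simp [CF] at hw
  | 1, w, hw => by simp [CF] at hw; subst hw; simp
  | m+2, w, hw => by
      simp only [CF, Finset.mem_biUnion, Finset.mem_image, Finset.mem_range] at hw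
      obtain ⟨u, hu, k, hk, rfl⟩ := hw
      rw [List.getLastD_concat]
      have := CF_last_lt (m+1) u hu
      omega

lemma mem_CF_iff : ∀ n, 1 ≤ n → ∀ w : List ℕ, (w ∈ CF n ↔ w ∈ CatalanWord n)
  | 0, h, w => by omega
  | 1, _, w => by
      simp only [CF, Finset.mem_singleton, CatalanWord, Set.mem_setOf_eq]
      constructor
      · rintro rfl; refine ⟨rfl, rfl, fun i hi => by omega⟩
      · rintro ⟨h1, h2, _⟩
        match w, h1 with
        | [a], _ => simp at h2; subst h2; rfl
  | m+2, _, w => by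
      constructor
      · intro hw
        simp only [CF, Finset.mem_biUnion, Finset.mem_image, Finset.mem_range] at hw
        obtain ⟨u, hu, k, hk, rfl⟩ := hw
        have hul : u.length = m+1 := CF_length (m+1) u hu
        have hu' : u ∈ CatalanWord (m+1) := (mem_CF_iff (m+1) (by omega) u).1 hu
        obtain ⟨h1, h2, h3⟩ := hu'
        have hne : u ≠ [] := CF_ne_nil (m+1) (by omega) u hu
        refine ⟨by simp [hul], ?_, ?_⟩
        · rw [List.getD_append _ _ _ _ (by omega)]; exact h2
        · intro i hi
          rcases lt_or_eq_of_le (Nat.lt_succ_iff.mp hi) with hlt | heq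
          · rw [List.getD_append _ _ _ _ (by omega), List.getD_append _ _ _ _ (by omega)]
            exact h3 i (by omega)
          · -- i + 1 = m + 1
            rw [heq]
            rw [List.getD_append_right _ _ _ _ (by omega), List.getD_append _ _ _ _ (by omega)]
            rw [hul, show m + 1 - (m+1) = 0 from by omega]
            simp only [List.getD_cons_zero]
            have hlast := getLastD_eq_getD u hne
            rw [hul] at hlast
            rw [show m + 1 - 1 = m from by omega] at hlast
            rw [show i = m from by omega, ← hlast]
            omega
      · intro hw
        obtain ⟨h1, h2, h3⟩ := hw
        have hne : w ≠ [] := by intro h; subst h; simp at h1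
        obtain ⟨u, a, rfl⟩ : ∃ u a, w = u ++ [a] := by
          rcases List.eq_nil_or_concat w with h | ⟨u, a, h⟩
          · exact absurd h hne
          · exact ⟨u, a, by simpa [List.concat_eq_append] using h⟩
        have hul : u.length = m+1 := by simp at h1; omega
        have hune : u ≠ [] := by intro h; subst h; simp at hul
        have hu : u ∈ CatalanWord (m+1) := by
          refine ⟨hul, ?_, ?_⟩
          · rw [← List.getD_append u [a] 0 0 (by omega)]; exact h2
          · intro i hi
            have e1 := List.getD_append u [a] 0 i (by omega)
            have e2 := List.getD_append u [a] 0 (i+1) (by omega)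
            rw [← e1, ← e2]
            exact h3 i (by omega)
        have humem : u ∈ CF (m+1) := (mem_CF_iff (m+1) (by omega) u).2 hu
        simp only [CF, Finset.mem_biUnion, Finset.mem_image, Finset.mem_range]
        refine ⟨u, humem, a, ?_, rfl⟩
        have hlast := getLastD_eq_getD u hune
        rw [hul, show m + 1 - 1 = m from by omega] at hlast
        have h3m := h3 m (by omega)
        rw [List.getD_append_right u [a] 0 (m+1) (by omega)] at h3m
        rw [List.getD_append u [a] 0 m (by omega)] at h3m
        rw [hul, show m + 1 - (m+1) = 0 from by omega] at h3m
        simp only [List.getD_cons_zero] at h3m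
        rw [hlast]
        omega
def dsc (w : List ℕ) : ℕ :=
  ∑ i ∈ Finset.range w.length,
    if (i + 1 < w.length ∧ w.getD (i+1) 0 ≤ w.getD i 0) then 1 else 0

lemma dsc_append (u : List ℕ) (hu : u ≠ []) (k : ℕ) :
    dsc (u ++ [k]) = dsc u + (if k ≤ u.getLastD 0 then 1 else 0) := by
  obtain ⟨L, hL⟩ : ∃ L, u.length = L + 1 :=
    ⟨u.length - 1, by cases u with | nil => exact absurd rfl hu | cons a t => simp⟩
  have hlast : u.getLastD 0 = u.getD L 0 := by
    rw [getLastD_eq_getD u hu, hL]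
    norm_num
  have RHSe : dsc u =
      ∑ i ∈ Finset.range L, if (i+1 < L+1 ∧ u.getD (i+1) 0 ≤ u.getD i 0) then 1 else 0 := by
    unfold dsc
    rw [hL, Finset.sum_range_succ]
    simp
  have LHSe : dsc (u ++ [k]) =
      (∑ i ∈ Finset.range L, if (i+1 < L+1 ∧ u.getD (i+1) 0 ≤ u.getD i 0) then 1 else 0)
      + (if k ≤ u.getD L 0 then 1 else 0) := by
    unfold dsc
    rw [List.length_append, List.length_singleton, hL]
    rw [Finset.sum_range_succ, Finset.sum_range_succ]
    have htop : (if (L+1+1 < L+1+1 ∧ (u++[k]).getD (L+1+1-1+1) 0 ≤ (u++[k]).getD (L+1) 0) then 1 else 0) = 0 := by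
      rw [if_neg]; rintro ⟨h, -⟩; omega
    have hmid : (if (L+1 < L+1+1 ∧ (u++[k]).getD (L+1) 0 ≤ (u++[k]).getD L 0) then 1 else 0)
        = (if k ≤ u.getD L 0 then 1 else 0) := by
      have e1 : (u++[k]).getD (L+1) 0 = k := by
        rw [List.getD_append_right u [k] 0 (L+1) (by omega), hL]
        simp
      have e2 : (u++[k]).getD L 0 = u.getD L 0 := List.getD_append u [k] 0 L (by omega)
      rw [e1, e2]
      apply if_congr _ rfl rfl
      constructor
      · exact fun h => h.2
      · exact fun h => ⟨by omega, h⟩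
    have hrest : ∀ i ∈ Finset.range L,
        (if (i+1 < L+1+1 ∧ (u++[k]).getD (i+1) 0 ≤ (u++[k]).getD i 0) then 1 else 0)
        = (if (i+1 < L+1 ∧ u.getD (i+1) 0 ≤ u.getD i 0) then 1 else 0) := by
      intro i hi
      simp only [Finset.mem_range] at hi
      rw [List.getD_append u [k] 0 (i+1) (by omega), List.getD_append u [k] 0 i (by omega)]
      apply if_congr _ rfl rfl
      constructor
      · exact fun h => ⟨by omega, h.2⟩
      · exact fun h => ⟨by omega, h.2⟩
    calc (∑ i ∈ Finset.range L,
            if (i+1 < L+1+1 ∧ (u++[k]).getD (i+1) 0 ≤ (u++[k]).getD i 0) then 1 else 0)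
          + (if (L+1 < L+1+1 ∧ (u++[k]).getD (L+1) 0 ≤ (u++[k]).getD L 0) then 1 else 0)
          + (if (L+1+1 < L+1+1 ∧ (u++[k]).getD (L+1+1-1+1) 0 ≤ (u++[k]).getD (L+1) 0) then 1 else 0)
        = (∑ i ∈ Finset.range L, if (i+1 < L+1 ∧ u.getD (i+1) 0 ≤ u.getD i 0) then 1 else 0)
          + (if k ≤ u.getD L 0 then 1 else 0) + 0 := by
          rw [htop, hmid, Finset.sum_congr rfl hrest]
      _ = _ := by omega
  rw [LHSe, RHSe, hlast]

lemma CF_sum (m : ℕ) (f : List ℕ → ℕ) :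
    ∑ w ∈ CF (m+2), f w
      = ∑ u ∈ CF (m+1), ∑ k ∈ Finset.range (u.getLastD 0 + 2), f (u ++ [k]) := by
  show ∑ w ∈ (CF (m+1)).biUnion _, f w = _
  rw [Finset.sum_biUnion]
  · apply Finset.sum_congr rfl
    intro u hu
    rw [Finset.sum_image]
    intro k1 _ k2 _ h
    have := List.append_cancel_left h
    simpa using this
  · intro u1 h1 u2 h2 hne
    simp only [Finset.disjoint_left]
    intro x hx1 hx2
    simp only [Finset.mem_image, Finset.mem_range] at hx1 hx2
    obtain ⟨k1, -, rfl⟩ := hx1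
    obtain ⟨k2, -, he⟩ := hx2
    exact hne (by
      have h' := congrArg List.dropLast he
      simpa using h'.symm)

lemma classify (m : ℕ) (g : ℕ → ℕ) (F : List ℕ → ℕ) :
    ∑ w ∈ CF m, g (w.getLastD 0) * F w
      = ∑ j ∈ Finset.range m, g j * (∑ w ∈ CF m, if w.getLastD 0 = j then F w else 0) := by
  have h1 : ∀ w ∈ CF m,
      g (w.getLastD 0) * F w
        = ∑ j ∈ Finset.range m, if w.getLastD 0 = j then g j * F w else 0 := by
    intro w hw
    rw [Finset.sum_ite_eq (Finset.range m) (w.getLastD 0) (fun j => g j * F w)]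
    rw [if_pos (Finset.mem_range.mpr (CF_last_lt m w hw))]
  rw [Finset.sum_congr rfl h1, Finset.sum_comm]
  apply Finset.sum_congr rfl
  intro j _
  rw [Finset.mul_sum]
  apply Finset.sum_congr rfl
  intro w _
  split <;> simp

lemma indicator_Ico (N t : ℕ) (c : ℕ → ℕ) :
    ∑ j ∈ Finset.range N, (if t ≤ j then 1 else 0) * c j = ∑ j ∈ Finset.Ico t N, c j := by
  have : Finset.Ico t N = (Finset.range N).filter (fun j => t ≤ j) := by
    ext x
    simp only [Finset.mem_Ico, Finset.mem_filter, Finset.mem_range]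
    omega
  rw [this, Finset.sum_filter]
  apply Finset.sum_congr rfl
  intro j _
  split <;> simp

lemma CF_count : ∀ m, 1 ≤ m → ∀ k,
    ((∑ w ∈ CF m, if w.getLastD 0 = k then 1 else 0) = cb m k)
    ∧ ((∑ w ∈ CF m, if w.getLastD 0 = k then dsc w else 0) = db m k) := by
  intro m
  induction m with
  | zero => omega
  | succ m ih =>
      intro _ k
      match m, ih with
      | 0, _ =>
          constructor
          · show (∑ w ∈ {[0]}, if w.getLastD 0 = k then 1 else 0) = cb 1 k
            rw [Finset.sum_singleton]
            simp only [cb]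
            have : ([0] : List ℕ).getLastD 0 = 0 := rfl
            rw [this]
            by_cases h : k = 0
            · subst h; simp
            · rw [if_neg (fun hh => h hh.symm), if_neg h]
          · show (∑ w ∈ {[0]}, if w.getLastD 0 = k then dsc w else 0) = db 1 k
            rw [Finset.sum_singleton]
            have : dsc [0] = 0 := by decide
            rw [this]
            show _ = 0
            split <;> rfl
      | m+1, ih =>
          have IH := ih (by omega)
          have hne : ∀ u ∈ CF (m+1), u ≠ [] := fun u hu => CF_ne_nil (m+1) (by omega) u hu
          constructor
          · rw [CF_sum (m := m) (f := fun w => if w.getLastD 0 = k then 1 else 0)]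
            have step1 : ∀ u ∈ CF (m+1),
                (∑ k' ∈ Finset.range (u.getLastD 0 + 2),
                  if (u ++ [k']).getLastD 0 = k then 1 else 0)
                = (if k - 1 ≤ u.getLastD 0 then 1 else 0) * 1 := by
              intro u hu
              have e : ∀ k', (u ++ [k']).getLastD 0 = k' := fun k' => List.getLastD_concat
              calc (∑ k' ∈ Finset.range (u.getLastD 0 + 2),
                      if (u ++ [k']).getLastD 0 = k then 1 else 0)
                  = ∑ k' ∈ Finset.range (u.getLastD 0 + 2), if k' = k then 1 else 0 := by
                    apply Finset.sum_congr rfl; intro k' _; rw [e k']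
                _ = if k ∈ Finset.range (u.getLastD 0 + 2) then 1 else 0 :=
                    Finset.sum_ite_eq' (Finset.range (u.getLastD 0 + 2)) k (fun _ => 1)
                _ = (if k - 1 ≤ u.getLastD 0 then 1 else 0) * 1 := by
                    simp only [Finset.mem_range, mul_one]
                    split_ifs <;> omega
            rw [Finset.sum_congr rfl step1]
            rw [classify (m+1) (fun j => if k - 1 ≤ j then 1 else 0) (fun _ => 1)]
            have : ∀ j ∈ Finset.range (m+1),
                (if k - 1 ≤ j then 1 else 0) * (∑ w ∈ CF (m+1), if w.getLastD 0 = j then 1 else 0)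
                = (if k - 1 ≤ j then 1 else 0) * cb (m+1) j := by
              intro j _
              rw [(IH j).1]
            rw [Finset.sum_congr rfl this, indicator_Ico (m+1) (k-1) (cb (m+1))]
            simp only [cb]
          · rw [CF_sum (m := m) (f := fun w => if w.getLastD 0 = k then dsc w else 0)]
            have step1 : ∀ u ∈ CF (m+1),
                (∑ k' ∈ Finset.range (u.getLastD 0 + 2),
                  if (u ++ [k']).getLastD 0 = k then dsc (u ++ [k']) else 0)
                = (if k - 1 ≤ u.getLastD 0 then 1 else 0) * dsc u
                  + (if k ≤ u.getLastD 0 then 1 else 0) * 1 := by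
              intro u hu
              have e : ∀ k', (u ++ [k']).getLastD 0 = k' := fun k' => List.getLastD_concat
              calc (∑ k' ∈ Finset.range (u.getLastD 0 + 2),
                      if (u ++ [k']).getLastD 0 = k then dsc (u ++ [k']) else 0)
                  = ∑ k' ∈ Finset.range (u.getLastD 0 + 2),
                      if k' = k then dsc (u ++ [k']) else 0 := by
                    apply Finset.sum_congr rfl; intro k' _
                    rw [e k']
                _ = if k ∈ Finset.range (u.getLastD 0 + 2) then dsc (u ++ [k]) else 0 :=
                    Finset.sum_ite_eq' (Finset.range (u.getLastD 0 + 2)) k (fun k' => dsc (u ++ [k']))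
                _ = _ := by
                    rw [dsc_append u (hne u hu) k]
                    simp only [Finset.mem_range, mul_one]
                    split_ifs <;> omega
            rw [Finset.sum_congr rfl step1, Finset.sum_add_distrib]
            rw [classify (m+1) (fun j => if k - 1 ≤ j then 1 else 0) dsc]
            rw [classify (m+1) (fun j => if k ≤ j then 1 else 0) (fun _ => 1)]
            have e1 : ∀ j ∈ Finset.range (m+1),
                (if k - 1 ≤ j then 1 else 0) * (∑ w ∈ CF (m+1), if w.getLastD 0 = j then dsc w else 0)
                = (if k - 1 ≤ j then 1 else 0) * db (m+1) j := by
              intro j _; rw [(IH j).2]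
            have e2 : ∀ j ∈ Finset.range (m+1),
                (if k ≤ j then 1 else 0) * (∑ w ∈ CF (m+1), if w.getLastD 0 = j then 1 else 0)
                = (if k ≤ j then 1 else 0) * cb (m+1) j := by
              intro j _; rw [(IH j).1]
            rw [Finset.sum_congr rfl e1, Finset.sum_congr rfl e2,
              indicator_Ico (m+1) (k-1) (db (m+1)), indicator_Ico (m+1) k (cb (m+1))]
            have hcb : ∑ j ∈ Finset.Ico k (m+1), cb (m+1) j = cb (m+2) (k+1) := by
              simp only [cb, Nat.add_sub_cancel]
            rw [hcb]
            simp only [db]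

lemma CF_dsc_total (m : ℕ) (hm : 2 ≤ m) :
    ∑ w ∈ CF m, dsc w = Nat.choose (2*m-1) (m-2) := by
  have h1 : ∑ w ∈ CF m, dsc w
      = ∑ w ∈ CF m, (fun _ => (1:ℕ)) (w.getLastD 0) * dsc w := by simp
  rw [h1, classify m (fun _ => 1) dsc]
  have h2 : ∀ j ∈ Finset.range m,
      (1:ℕ) * (∑ w ∈ CF m, if w.getLastD 0 = j then dsc w else 0) = db m j := by
    intro j _
    rw [one_mul, (CF_count m (by omega) j).2]
  rw [Finset.sum_congr rfl h2]
  exact db_total m hm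
lemma getD_take' (w : List ℕ) (i j : ℕ) (h : j < i) : (w.take i).getD j 0 = w.getD j 0 := by
  rw [List.getD_eq_getElem?_getD, List.getD_eq_getElem?_getD, List.getElem?_take, if_pos h]

lemma getD_drop' (w : List ℕ) (d j : ℕ) : (w.drop d).getD j 0 = w.getD (d + j) 0 := by
  rw [List.getD_eq_getElem?_getD, List.getD_eq_getElem?_getD, List.getElem?_drop]

lemma getD_replicate' (c l j : ℕ) (h : j < l) : (List.replicate l c).getD j 0 = c := by
  rw [List.getD_eq_getElem _ _ (by simpa using h)]
  simp

def ctr (w : List ℕ) (i l : ℕ) : List ℕ := w.take (i+1) ++ w.drop (i+l+1)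

def expd (u : List ℕ) (i l : ℕ) : List ℕ :=
  u.take (i+1) ++ (List.replicate l (u.getD i 0 + 1) ++ u.drop (i+1))

lemma take_len (w : List ℕ) (i : ℕ) (h : i + 1 ≤ w.length) : (w.take (i+1)).length = i+1 := by
  simp [List.length_take]; omega

lemma ctr_length (w : List ℕ) (i l : ℕ) (h : i + l + 1 ≤ w.length) :
    (ctr w i l).length = w.length - l := by
  unfold ctr
  rw [List.length_append, take_len w i (by omega), List.length_drop]
  omega

lemma expd_length (u : List ℕ) (i l : ℕ) (h : i + 1 ≤ u.length) :
    (expd u i l).length = u.length + l := by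
  unfold expd
  rw [List.length_append, take_len u i h, List.length_append, List.length_replicate,
    List.length_drop]
  omega

lemma ctr_getD_le (w : List ℕ) (i l j : ℕ) (h : j ≤ i) (hw : i + 1 ≤ w.length) :
    (ctr w i l).getD j 0 = w.getD j 0 := by
  unfold ctr
  rw [List.getD_append _ _ _ _ (by rw [take_len w i hw]; omega)]
  exact getD_take' w (i+1) j (by omega)

lemma ctr_getD_ge (w : List ℕ) (i l j : ℕ) (h : i + 1 ≤ j) (hw : i + 1 ≤ w.length) :
    (ctr w i l).getD j 0 = w.getD (j + l) 0 := by
  unfold ctr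
  rw [List.getD_append_right _ _ _ _ (by rw [take_len w i hw]; omega)]
  rw [take_len w i hw, getD_drop']
  congr 1
  omega

lemma expd_getD_le (u : List ℕ) (i l j : ℕ) (h : j ≤ i) (hu : i + 1 ≤ u.length) :
    (expd u i l).getD j 0 = u.getD j 0 := by
  unfold expd
  rw [List.getD_append _ _ _ _ (by rw [take_len u i hu]; omega)]
  exact getD_take' u (i+1) j (by omega)

lemma expd_getD_mid (u : List ℕ) (i l j : ℕ) (h1 : i + 1 ≤ j) (h2 : j ≤ i + l)
    (hu : i + 1 ≤ u.length) : (expd u i l).getD j 0 = u.getD i 0 + 1 := by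
  unfold expd
  rw [List.getD_append_right _ _ _ _ (by rw [take_len u i hu]; omega)]
  rw [take_len u i hu]
  rw [List.getD_append _ _ _ _ (by rw [List.length_replicate]; omega)]
  exact getD_replicate' _ _ _ (by omega)

lemma expd_getD_ge (u : List ℕ) (i l j : ℕ) (h : i + l + 1 ≤ j) (hu : i + 1 ≤ u.length) :
    (expd u i l).getD j 0 = u.getD (j - l) 0 := by
  unfold expd
  rw [List.getD_append_right _ _ _ _ (by rw [take_len u i hu]; omega)]
  rw [take_len u i hu]
  rw [List.getD_append_right _ _ _ _ (by rw [List.length_replicate]; omega)]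
  rw [List.length_replicate, getD_drop']
  congr 1
  omega

lemma run_split : ∀ (l : ℕ) (v : List ℕ) (c : ℕ), l ≤ v.length →
    (∀ j, j < l → v.getD j 0 = c) → v = List.replicate l c ++ v.drop l
  | 0, v, c, _, _ => by simp
  | l+1, v, c, h, hj => by
      match v, h with
      | a :: v', h =>
        have ha : a = c := by simpa using hj 0 (by omega)
        have hrec : v' = List.replicate l c ++ v'.drop l :=
          run_split l v' c (by simp at h; omega)
            (fun j hjl => by simpa using hj (j+1) (by omega))
        rw [List.replicate_succ, List.drop_succ_cons]
        rw [List.cons_append]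
        rw [ha]
        congr 1

lemma word_split (w : List ℕ) (i l : ℕ) (hw : i + l + 1 ≤ w.length)
    (hrun : ∀ j, j < l → w.getD (i+1+j) 0 = w.getD i 0 + 1) :
    w = w.take (i+1) ++ (List.replicate l (w.getD i 0 + 1) ++ w.drop (i+l+1)) := by
  conv_lhs => rw [← List.take_append_drop (i+1) w]
  congr 1
  have hd : w.drop (i+l+1) = (w.drop (i+1)).drop l := by
    rw [List.drop_drop]
    congr 1
    omega
  rw [hd]
  apply run_split l (w.drop (i+1)) _ (by rw [List.length_drop]; omega)
  intro j hjl
  rw [getD_drop']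
  exact hrun j hjl

lemma expd_ctr (w : List ℕ) (i l : ℕ) (hw : i + l + 1 ≤ w.length)
    (hrun : ∀ j, j < l → w.getD (i+1+j) 0 = w.getD i 0 + 1) :
    expd (ctr w i l) i l = w := by
  have ht : (ctr w i l).take (i+1) = w.take (i+1) := by
    unfold ctr
    exact List.take_left' (take_len w i (by omega))
  have hdr : (ctr w i l).drop (i+1) = w.drop (i+l+1) := by
    unfold ctr
    exact List.drop_left' (take_len w i (by omega))
  have hg : (ctr w i l).getD i 0 = w.getD i 0 := ctr_getD_le w i l i le_rfl (by omega)
  unfold expd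
  rw [ht, hdr, hg]
  exact (word_split w i l hw hrun).symm

lemma ctr_expd (u : List ℕ) (i l : ℕ) (hu : i + 1 ≤ u.length) :
    ctr (expd u i l) i l = u := by
  have ht : (expd u i l).take (i+1) = u.take (i+1) := by
    unfold expd
    exact List.take_left' (take_len u i hu)
  have hdr : (expd u i l).drop (i+l+1) = u.drop (i+1) := by
    unfold expd
    rw [← List.append_assoc]
    apply List.drop_left'
    rw [List.length_append, take_len u i hu, List.length_replicate]
    omega
  unfold ctr
  rw [ht, hdr]
  exact List.take_append_drop (i+1) u

lemma ctr_mem (n l m : ℕ) (hl : 1 ≤ l) (hmn : m + l = n) (hm2 : 2 ≤ m)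
    (w : List ℕ) (hw : w ∈ CatalanWord n) (i : ℕ)
    (hp1 : i + l + 1 < n)
    (hp2 : ∀ j, j < l → w.getD (i+1+j) 0 = w.getD i 0 + 1)
    (hp3 : w.getD (i+l+1) 0 ≤ w.getD i 0) :
    ctr w i l ∈ CatalanWord m ∧ i + 1 < m ∧
      (ctr w i l).getD (i+1) 0 ≤ (ctr w i l).getD i 0 := by
  obtain ⟨hlen, hzero, hstep⟩ := hw
  have hwl : i + l + 1 < w.length := by omega
  have him : i + 1 < m := by omega
  have hgfirst : (ctr w i l).getD (i+1) 0 = w.getD (i+l+1) 0 := by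
    rw [ctr_getD_ge w i l (i+1) le_rfl (by omega)]
    congr 1
    omega
  have hgi : (ctr w i l).getD i 0 = w.getD i 0 := ctr_getD_le w i l i le_rfl (by omega)
  refine ⟨⟨?_, ?_, ?_⟩, him, ?_⟩
  · rw [ctr_length w i l (by omega), hlen]; omega
  · rw [ctr_getD_le w i l 0 (by omega) (by omega)]; exact hzero
  · intro j hj
    rcases Nat.lt_or_ge j i with hji | hji
    · rw [ctr_getD_le w i l (j+1) (by omega) (by omega),
        ctr_getD_le w i l j (by omega) (by omega)]
      exact hstep j (by omega)
    rcases Nat.eq_or_lt_of_le hji with rfl | hji'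
    · rw [hgfirst] at *
      rw [hgi]
      omega
    · rw [ctr_getD_ge w i l (j+1) (by omega) (by omega),
        ctr_getD_ge w i l j (by omega) (by omega)]
      have := hstep (j+l) (by omega)
      rw [show j + l + 1 = j + 1 + l from by omega] at this
      exact this
  · rw [hgfirst, hgi]
    exact hp3

lemma expd_mem (n l m : ℕ) (hl : 1 ≤ l) (hmn : m + l = n) (hm2 : 2 ≤ m)
    (u : List ℕ) (hu : u ∈ CatalanWord m) (i : ℕ)
    (hd1 : i + 1 < m) (hd2 : u.getD (i+1) 0 ≤ u.getD i 0) :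
    expd u i l ∈ CatalanWord n ∧ i + l + 1 < n ∧
      (∀ j, j < l → (expd u i l).getD (i+1+j) 0 = (expd u i l).getD i 0 + 1) ∧
      (expd u i l).getD (i+l+1) 0 ≤ (expd u i l).getD i 0 := by
  obtain ⟨hlen, hzero, hstep⟩ := hu
  have hul : i + 1 < u.length := by omega
  have hgi : (expd u i l).getD i 0 = u.getD i 0 := expd_getD_le u i l i le_rfl (by omega)
  have hgend : (expd u i l).getD (i+l+1) 0 = u.getD (i+1) 0 := by
    rw [expd_getD_ge u i l (i+l+1) le_rfl (by omega)]
    congr 1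
    omega
  refine ⟨⟨?_, ?_, ?_⟩, by omega, ?_, ?_⟩
  · rw [expd_length u i l (by omega), hlen]; omega
  · rw [expd_getD_le u i l 0 (by omega) (by omega)]; exact hzero
  · intro j hj
    rcases Nat.lt_or_ge (j+1) (i+1) with hji | hji
    · rw [expd_getD_le u i l (j+1) (by omega) (by omega),
        expd_getD_le u i l j (by omega) (by omega)]
      exact hstep j (by omega)
    rcases Nat.lt_or_ge j (i+l) with hjm | hjm
    · -- j+1 in [i+1, i+l]
      rw [expd_getD_mid u i l (j+1) (by omega) (by omega) (by omega)]
      rcases Nat.eq_or_lt_of_le hji with heq | hgt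
      · -- j = i
        rw [show j = i from by omega, hgi]
      · rw [expd_getD_mid u i l j (by omega) (by omega) (by omega)]
        omega
    rcases Nat.eq_or_lt_of_le hjm with heq | hgt
    · -- j = i + l
      rw [show j + 1 = i + l + 1 from by omega, hgend]
      rcases Nat.eq_or_lt_of_le hl with hl1 | hl2
      · -- l = 1 impossible branch? l ≥ 1; j = i+l; expd j = mid since i+1 ≤ j = i+l ≤ i+l
        rw [show j = i + l from by omega,
          expd_getD_mid u i l (i+l) (by omega) (by omega) (by omega)]
        omega
      · rw [show j = i + l from by omega,
          expd_getD_mid u i l (i+l) (by omega) (by omega) (by omega)]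
        omega
    · rw [expd_getD_ge u i l (j+1) (by omega) (by omega),
        expd_getD_ge u i l j (by omega) (by omega)]
      have := hstep (j - l) (by omega)
      rw [show j - l + 1 = j + 1 - l from by omega] at this
      exact this
  · intro j hj
    rw [expd_getD_mid u i l (i+1+j) (by omega) (by omega) (by omega), hgi]
  · rw [hgend, hgi]
    exact hd2

lemma peaks_to_desc (n l : ℕ) (hl : 1 ≤ l) (hn : l + 2 ≤ n) :
    ∑ w ∈ CF n, lPeaks l w = ∑ u ∈ CF (n - l), dsc u := by
  set m := n - l with hm
  have hmn : m + l = n := by omega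
  have hm2 : 2 ≤ m := by omega
  have hA : ∑ w ∈ CF n, lPeaks l w = ((CF n).sigma (fun w => (Finset.range n).filter (fun i =>
      i + l + 1 < n ∧ (∀ j, j < l → w.getD (i+1+j) 0 = w.getD i 0 + 1) ∧
      w.getD (i+l+1) 0 ≤ w.getD i 0))).card := by
    rw [Finset.card_sigma]
    apply Finset.sum_congr rfl
    intro w hw
    have hlen := CF_length n w hw
    unfold lPeaks
    simp only [hlen]
  have hB : ∑ u ∈ CF m, dsc u = ((CF m).sigma (fun u => (Finset.range m).filter (fun i =>
      i + 1 < m ∧ u.getD (i+1) 0 ≤ u.getD i 0))).card := by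
    rw [Finset.card_sigma]
    apply Finset.sum_congr rfl
    intro u hu
    have hlen := CF_length m u hu
    rw [Finset.card_filter]
    unfold dsc
    simp only [hlen]
  rw [hA, hB]
  apply Finset.card_bij' (i := fun p _ => (⟨ctr p.1 p.2 l, p.2⟩ : (_ : List ℕ) × ℕ))
    (j := fun p _ => (⟨expd p.1 p.2 l, p.2⟩ : (_ : List ℕ) × ℕ))
  · rintro ⟨w, i⟩ ha
    rw [Finset.mem_sigma, Finset.mem_filter, Finset.mem_range] at ha
    dsimp only at ha ⊢
    obtain ⟨hw, ⟨-, hp1, hp2, hp3⟩⟩ := ha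
    have hwcat : w ∈ CatalanWord n := (mem_CF_iff n (by omega) w).1 hw
    obtain ⟨hcat, hi, hd⟩ := ctr_mem n l m hl hmn hm2 w hwcat i hp1 hp2 hp3
    rw [Finset.mem_sigma, Finset.mem_filter, Finset.mem_range]
    dsimp only
    exact ⟨(mem_CF_iff m (by omega) _).2 hcat, by omega, hi, hd⟩
  · rintro ⟨u, i⟩ hb
    rw [Finset.mem_sigma, Finset.mem_filter, Finset.mem_range] at hb
    dsimp only at hb ⊢
    obtain ⟨hu, ⟨-, hd1, hd2⟩⟩ := hb
    have hucat : u ∈ CatalanWord m := (mem_CF_iff m (by omega) u).1 hu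
    obtain ⟨hcat, hq1, hq2, hq3⟩ := expd_mem n l m hl hmn hm2 u hucat i hd1 hd2
    rw [Finset.mem_sigma, Finset.mem_filter, Finset.mem_range]
    dsimp only
    exact ⟨(mem_CF_iff n (by omega) _).2 hcat, by omega, hq1, hq2, hq3⟩
  · rintro ⟨w, i⟩ ha
    rw [Finset.mem_sigma, Finset.mem_filter, Finset.mem_range] at ha
    dsimp only at ha ⊢
    obtain ⟨hw, ⟨-, hp1, hp2, hp3⟩⟩ := ha
    have hlen := CF_length n w hw
    have : expd (ctr w i l) i l = w := expd_ctr w i l (by omega) hp2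
    simp only [this]
  · rintro ⟨u, i⟩ hb
    rw [Finset.mem_sigma, Finset.mem_filter, Finset.mem_range] at hb
    dsimp only at hb ⊢
    obtain ⟨hu, ⟨-, hd1, hd2⟩⟩ := hb
    have hlen := CF_length m u hu
    have : ctr (expd u i l) i l = u := ctr_expd u i l (by omega)
    simp only [this]

/-- The total number of peaks over all Catalan words of length `n` equals
`Σ_{l=1}^{n-1} C(2(n-l)-1, n-l-2)`, a summand being `0` whenever `n-l-2 < 0`. -/
theorem total_peaks (n : ℕ) (hn : 1 ≤ n) :
    ∑ᶠ w ∈ CatalanWord n, peaks w =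
      ∑ l ∈ Finset.Icc 1 (n - 1),
        if l + 2 ≤ n then Nat.choose (2 * (n - l) - 1) (n - l - 2) else 0 := by
  have hset : CatalanWord n = ↑(CF n) := by
    ext w
    rw [Finset.mem_coe]
    exact (mem_CF_iff n hn w).symm
  rw [hset, finsum_mem_coe_finset]
  have hpk : ∀ w ∈ CF n, peaks w = ∑ l ∈ Finset.Icc 1 n, lPeaks l w := by
    intro w hw
    unfold peaks
    rw [CF_length n w hw]
  rw [Finset.sum_congr rfl hpk, Finset.sum_comm]
  have hterm : ∀ l ∈ Finset.Icc 1 n, (∑ w ∈ CF n, lPeaks l w)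
      = if l + 2 ≤ n then Nat.choose (2*(n-l)-1) (n-l-2) else 0 := by
    intro l hl
    simp only [Finset.mem_Icc] at hl
    by_cases hc : l + 2 ≤ n
    · rw [if_pos hc, peaks_to_desc n l hl.1 hc, CF_dsc_total (n-l) (by omega)]
    · rw [if_neg hc]
      apply Finset.sum_eq_zero
      intro w hw
      have hlen := CF_length n w hw
      unfold lPeaks
      rw [Finset.card_eq_zero, Finset.filter_eq_empty_iff]
      intro i hi
      rintro ⟨h1, -, -⟩
      omega
  rw [Finset.sum_congr rfl hterm]
  obtain ⟨n', rfl⟩ : ∃ n', n = n' + 1 := ⟨n-1, by omega⟩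
  rw [show n' + 1 - 1 = n' from rfl]
  rw [Finset.sum_Icc_succ_top (by omega : 1 ≤ n'+1)]
  rw [if_neg (by omega)]
  rw [add_zero]
end
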